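/- The smooth top-k hinge loss L_γ, being the convex conjugate of a γ-strongly convex function, is differentiable with (1/γ)-Lipschitz gradient, and its gradient is ∇L_γ(a) = (1/γ)·proj_{Δ^α_k(γ)}(a + c), the scaled Euclidean projection of a+c onto the top-k simplex of radius γ. -/

import Mathlib

open Finset RealInnerProductSpace

section Aux

variable {F : Type*} [NormedAddCommGroup F] [InnerProductSpace ℝ F]

/-- Variational inequality for a metric projection onto a convex set. -/
lemma proj_var_ineq {C : Set F} (hconv : Convex ℝ C) {z p : F} (hp : p ∈ C)
    (hmin : ∀ w ∈ C, dist z p ≤ dist z w) :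
    ∀ w ∈ C, ⟪z - p, w - p⟫ ≤ 0 := by
  rw [← norm_eq_iInf_iff_real_inner_le_zero hconv hp]
  haveI : Nonempty C := ⟨⟨p, hp⟩⟩
  apply le_antisymm
  · apply le_ciInf
    intro w
    simpa [dist_eq_norm] using hmin w w.2
  · apply ciInf_le _ (⟨p, hp⟩ : C)
    refine ⟨0, ?_⟩
    rintro x ⟨w, rfl⟩
    exact norm_nonneg _

/-- The projection supports: for any `p ∈ C`,
`⟪z, p⟫ - ½‖p‖² ≤ ⟪z, P z⟫ - ½‖P z‖²`. -/
lemma proj_sup {C : Set F} {z q p : F} (hq : q ∈ C) (hp : p ∈ C)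
    (hmin : ∀ w ∈ C, dist z p ≤ dist z w) :
    ⟪z, q⟫ - (1/2) * ‖q‖^2 ≤ ⟪z, p⟫ - (1/2) * ‖p‖^2 := by
  have h := hmin q hq
  rw [dist_eq_norm, dist_eq_norm] at h
  have h2 : ‖z - p‖^2 ≤ ‖z - q‖^2 := by
    nlinarith [norm_nonneg (z - p), norm_nonneg (z - q)]
  rw [norm_sub_sq_real, norm_sub_sq_real] at h2
  linarith

end Aux

theorem stmt18 (m k : ℕ) (hk : 0 < k) (γ : ℝ) (hγ : 0 < γ)
    (c : EuclideanSpace ℝ (Fin m))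
    (C : Set (EuclideanSpace ℝ (Fin m)))
    (hC : C = {x : EuclideanSpace ℝ (Fin m) |
      (∑ i, x i ≤ γ) ∧ ∀ i, 0 ≤ x i ∧ x i ≤ (1 / (k : ℝ)) * ∑ j, x j})
    (P : EuclideanSpace ℝ (Fin m) → EuclideanSpace ℝ (Fin m))
    (hP : ∀ z, P z ∈ C ∧ ∀ w ∈ C, dist z (P z) ≤ dist z w)
    (L : EuclideanSpace ℝ (Fin m) → ℝ)
    (hL : ∀ a, L a = (1 / γ) *
      ((inner ℝ (a + c) (P (a + c)) : ℝ)
        - (1 / 2) * (inner ℝ (P (a + c)) (P (a + c)) : ℝ))) :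
    (∀ a, HasGradientAt L ((1 / γ) • P (a + c)) a) ∧
    LipschitzWith (1 / γ).toNNReal (fun a => (1 / γ) • P (a + c)) := by
  -- convexity of C
  have hconv : Convex ℝ C := by
    subst hC
    intro x hx y hy a b ha hb hab
    obtain ⟨hx1, hx2⟩ := hx
    obtain ⟨hy1, hy2⟩ := hy
    have hsmul : ∀ i, (a • x + b • y) i = a * x i + b * y i := by
      intro i; simp [PiLp.add_apply, PiLp.smul_apply, smul_eq_mul]
    constructor
    · simp only [hsmul, Finset.sum_add_distrib, ← Finset.mul_sum]
      nlinarith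
    · intro i
      have h1 := (hx2 i).1
      have h2 := (hy2 i).1
      have h3 := (hx2 i).2
      have h4 := (hy2 i).2
      simp only [hsmul, Finset.sum_add_distrib, ← Finset.mul_sum]
      constructor
      · positivity
      · nlinarith
  -- nonexpansiveness of P (extracted)
  have hPne : ∀ z w : EuclideanSpace ℝ (Fin m), ‖P w - P z‖ ≤ ‖w - z‖ := by
    intro z w
    obtain ⟨hzC, hzmin⟩ := hP z
    obtain ⟨hwC, hwmin⟩ := hP w
    have vi1 := proj_var_ineq hconv hzC hzmin (P w) hwC
    have vi2 := proj_var_ineq hconv hwC hwmin (P z) hzC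
    have hfirm : ‖P w - P z‖^2 ≤ ⟪w - z, P w - P z⟫ := by
      rw [inner_sub_left, inner_sub_right, inner_sub_right] at vi1 vi2 ⊢
      have hsym : ⟪P z, P w⟫ = ⟪P w, P z⟫ := real_inner_comm _ _
      have hself : ‖P w - P z‖^2 = ⟪P w, P w⟫ - ⟪P w, P z⟫ - (⟪P z, P w⟫ - ⟪P z, P z⟫) := by
        rw [← real_inner_self_eq_norm_sq, inner_sub_left, inner_sub_right, inner_sub_right]
      linarith
    rcases eq_or_lt_of_le (norm_nonneg (P w - P z)) with h0 | h0
    · rw [← h0]; exact norm_nonneg _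
    · have hcs : ⟪w - z, P w - P z⟫ ≤ ‖w - z‖ * ‖P w - P z‖ := real_inner_le_norm _ _
      nlinarith
  -- key estimate: for any z w, the "Moreau" error bound
  have key : ∀ z w : EuclideanSpace ℝ (Fin m),
      0 ≤ (⟪w, P w⟫ - (1/2) * ‖P w‖^2) - (⟪z, P z⟫ - (1/2) * ‖P z‖^2)
          - ⟪P z, w - z⟫ ∧
      (⟪w, P w⟫ - (1/2) * ‖P w‖^2) - (⟪z, P z⟫ - (1/2) * ‖P z‖^2)
          - ⟪P z, w - z⟫ ≤ ‖w - z‖^2 := by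
    intro z w
    obtain ⟨hzC, hzmin⟩ := hP z
    obtain ⟨hwC, hwmin⟩ := hP w
    have h1 : ⟪w, P z⟫ - (1/2) * ‖P z‖^2 ≤ ⟪w, P w⟫ - (1/2) * ‖P w‖^2 :=
      proj_sup hzC hwC hwmin
    have h2 : ⟪z, P w⟫ - (1/2) * ‖P w‖^2 ≤ ⟪z, P z⟫ - (1/2) * ‖P z‖^2 :=
      proj_sup hwC hzC hzmin
    have hne : ‖P w - P z‖ ≤ ‖w - z‖ := hPne z w
    constructor
    · have : ⟪w, P z⟫ - ⟪z, P z⟫ = ⟪P z, w - z⟫ := by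
        rw [inner_sub_right, real_inner_comm (P z) w, real_inner_comm (P z) z]
      linarith
    · have e1 : ⟪w, P w⟫ - ⟪z, P w⟫ = ⟪P w, w - z⟫ := by
        rw [inner_sub_right, real_inner_comm (P w) w, real_inner_comm (P w) z]
      have e2 : ⟪P w, w - z⟫ - ⟪P z, w - z⟫ = ⟪P w - P z, w - z⟫ := by
        rw [inner_sub_left]
      have hcs : ⟪P w - P z, w - z⟫ ≤ ‖P w - P z‖ * ‖w - z‖ := real_inner_le_norm _ _
      nlinarith [norm_nonneg (w - z)]
  constructor
  · intro a
    rw [hasGradientAt_iff_isLittleO]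
    have hbound : ∀ b : EuclideanSpace ℝ (Fin m),
        ‖L b - L a - ⟪(1/γ) • P (a + c), b - a⟫‖ ≤ (1/γ) * ‖b - a‖^2 := by
      intro b
      obtain ⟨k1, k2⟩ := key (a + c) (b + c)
      have hsub : (b + c) - (a + c) = b - a := by abel
      rw [hsub] at k1 k2
      have hLa := hL a
      have hLb := hL b
      have hinner : ⟪(1/γ) • P (a + c), b - a⟫ = (1/γ) * ⟪P (a + c), b - a⟫ := by
        rw [real_inner_smul_left]
      have hsq : ∀ v : EuclideanSpace ℝ (Fin m), (inner ℝ v v : ℝ) = ‖v‖^2 :=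
        fun v => real_inner_self_eq_norm_sq v
      rw [hLa, hLb, hinner, hsq, hsq]
      have : (1/γ) * (⟪b + c, P (b + c)⟫ - 1/2 * ‖P (b+c)‖^2)
           - (1/γ) * (⟪a + c, P (a + c)⟫ - 1/2 * ‖P (a+c)‖^2)
           - (1/γ) * ⟪P (a + c), b - a⟫
           = (1/γ) * ((⟪b + c, P (b + c)⟫ - (1/2) * ‖P (b+c)‖^2)
              - (⟪a + c, P (a + c)⟫ - (1/2) * ‖P (a+c)‖^2) - ⟪P (a + c), b - a⟫) := by
        ring
      rw [this, Real.norm_eq_abs, abs_of_nonneg (by positivity)]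
      have hγ' : 0 ≤ 1/γ := by positivity
      nlinarith
    rw [Asymptotics.isLittleO_iff]
    intro ε hε
    filter_upwards [Metric.ball_mem_nhds a (show (0:ℝ) < ε * γ by positivity)] with b hb
    rw [Metric.mem_ball, dist_eq_norm] at hb
    have h1 := hbound b
    have h2 : (1/γ) * ‖b - a‖^2 ≤ ε * ‖b - a‖ := by
      have hn : 0 ≤ ‖b - a‖ := norm_nonneg _
      have : (1/γ) * ‖b - a‖^2 = (1/γ) * ‖b - a‖ * ‖b - a‖ := by ring
      rw [this]
      apply mul_le_mul_of_nonneg_right _ hn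
      rw [div_mul_eq_mul_div, one_mul, div_le_iff₀ hγ]
      nlinarith
    exact le_trans h1 h2
  · apply LipschitzWith.of_dist_le_mul
    intro a b
    rw [dist_eq_norm, ← smul_sub, norm_smul]
    have h1 : ‖(1/γ : ℝ)‖ = 1/γ := by
      rw [Real.norm_eq_abs, abs_of_pos (by positivity)]
    rw [h1]
    have h2 : ((1/γ : ℝ).toNNReal : ℝ) = 1/γ := Real.coe_toNNReal _ (by positivity)
    rw [h2, dist_eq_norm]
    have := hPne (b + c) (a + c)
    have hsub : (a + c) - (b + c) = a - b := by abel
    rw [hsub] at this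
    exact mul_le_mul_of_nonneg_left this (by positivity)
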